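/- Let L be a rank-3 positive definite lattice over ℤ with basis λ₁, λ₂, τ whose Gram matrix is one of [[2,0,0],[0,2,0],[0,0,2k]], [[2,0,0],[0,2,1],[0,1,2k+1]], or [[2,0,1],[0,2,1],[1,1,2k+2]] with k ≥ 1. Then the group of isometries of L fixing λ₁ and λ₂ is isomorphic to ℤ/2ℤ. -/
import Mathlib

set_option maxHeartbeats 1000000


/-- For each of the three possible Gram matrices of L_d, the group of
isometries fixing λ₁, λ₂ is isomorphic to ℤ/2ℤ: it consists of the identity
and one nontrivial involution. -/
theorem stmt_11 (k : ℤ) (hk : 1 ≤ k) (G : Matrix (Fin 3) (Fin 3) ℤ)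
    (hG : G = !![2,0,0;0,2,0;0,0,2*k] ∨ G = !![2,0,0;0,2,1;0,1,2*k+1] ∨
          G = !![2,0,1;0,2,1;1,1,2*k+2]) :
    ∃ M₀ : Matrix (Fin 3) (Fin 3) ℤ, M₀ ≠ 1 ∧ M₀ * M₀ = 1 ∧
      {M : Matrix (Fin 3) (Fin 3) ℤ | IsUnit M.det ∧ M.transpose * G * M = G ∧
        M.mulVec ![1,0,0] = ![1,0,0] ∧ M.mulVec ![0,1,0] = ![0,1,0]} = {1, M₀} := by
  rcases hG with rfl | rfl | rfl
  · refine ⟨!![1,0,0;0,1,0;0,0,-1], ?_, ?_, ?_⟩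
    · intro h
      have := congrFun (congrFun h 2) 2
      simp [Matrix.one_apply] at this
    · ext i j
      fin_cases i <;> fin_cases j <;>
        simp [Matrix.mul_apply, Fin.sum_univ_three, Matrix.one_apply, Matrix.vecHead, Matrix.vecTail]
    · ext M
      simp only [Set.mem_setOf_eq, Set.mem_insert_iff, Set.mem_singleton_iff]
      constructor
      · rintro ⟨hdet, hg, h1, h2⟩
        have e00 := congrFun h1 0
        have e10 := congrFun h1 1
        have e20 := congrFun h1 2
        have e01 := congrFun h2 0
        have e11 := congrFun h2 1
        have e21 := congrFun h2 2
        simp [Matrix.mulVec, dotProduct, Fin.sum_univ_three] at e00 e10 e20 e01 e11 e21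
        have g02 := congrFun (congrFun hg 0) 2
        have g12 := congrFun (congrFun hg 1) 2
        simp [Matrix.mul_apply, Fin.sum_univ_three, Matrix.transpose_apply,
          e00, e10, e20, e01, e11, e21] at g02 g12
        rw [Matrix.det_fin_three] at hdet
        rw [Int.isUnit_iff] at hdet
        simp [Matrix.vecHead, Matrix.vecTail, e00, e10, e20, e01, e11, e21] at hdet
        rcases hdet with hc | hc
        · left
          have ha : M 0 2 = 0 := by omega
          have hb : M 1 2 = 0 := by omega
          ext i j
          fin_cases i <;> fin_cases j <;>
            simp [Matrix.one_apply, Matrix.vecHead, Matrix.vecTail, e00, e10, e20, e01, e11, e21, ha, hb, hc]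
        · right
          have ha : M 0 2 = 0 := by omega
          have hb : M 1 2 = 0 := by omega
          ext i j
          fin_cases i <;> fin_cases j <;>
            simp [Matrix.vecHead, Matrix.vecTail, e00, e10, e20, e01, e11, e21, ha, hb, hc]
      · rintro (rfl | rfl)
        · exact ⟨by simp, by simp, by simp, by simp⟩
        · refine ⟨by simp [Matrix.det_fin_three, Matrix.vecHead, Matrix.vecTail], ?_, ?_, ?_⟩
          · ext i j
            fin_cases i <;> fin_cases j <;>
              simp [Matrix.mul_apply, Fin.sum_univ_three, Matrix.transpose_apply,
                Matrix.vecHead, Matrix.vecTail] <;> ring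
          · ext i
            fin_cases i <;>
              simp [Matrix.mulVec, dotProduct, Fin.sum_univ_three,
                Matrix.vecHead, Matrix.vecTail]
          · ext i
            fin_cases i <;>
              simp [Matrix.mulVec, dotProduct, Fin.sum_univ_three,
                Matrix.vecHead, Matrix.vecTail]
  · refine ⟨!![1,0,0;0,1,1;0,0,-1], ?_, ?_, ?_⟩
    · intro h
      have := congrFun (congrFun h 2) 2
      simp [Matrix.one_apply] at this
    · ext i j
      fin_cases i <;> fin_cases j <;>
        simp [Matrix.mul_apply, Fin.sum_univ_three, Matrix.one_apply, Matrix.vecHead, Matrix.vecTail]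
    · ext M
      simp only [Set.mem_setOf_eq, Set.mem_insert_iff, Set.mem_singleton_iff]
      constructor
      · rintro ⟨hdet, hg, h1, h2⟩
        have e00 := congrFun h1 0
        have e10 := congrFun h1 1
        have e20 := congrFun h1 2
        have e01 := congrFun h2 0
        have e11 := congrFun h2 1
        have e21 := congrFun h2 2
        simp [Matrix.mulVec, dotProduct, Fin.sum_univ_three] at e00 e10 e20 e01 e11 e21
        have g02 := congrFun (congrFun hg 0) 2
        have g12 := congrFun (congrFun hg 1) 2
        simp [Matrix.mul_apply, Fin.sum_univ_three, Matrix.transpose_apply,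
          e00, e10, e20, e01, e11, e21] at g02 g12
        rw [Matrix.det_fin_three] at hdet
        rw [Int.isUnit_iff] at hdet
        simp [Matrix.vecHead, Matrix.vecTail, e00, e10, e20, e01, e11, e21] at hdet
        rcases hdet with hc | hc
        · left
          have ha : M 0 2 = 0 := by omega
          have hb : M 1 2 = 0 := by omega
          ext i j
          fin_cases i <;> fin_cases j <;>
            simp [Matrix.one_apply, Matrix.vecHead, Matrix.vecTail, e00, e10, e20, e01, e11, e21, ha, hb, hc]
        · right
          have ha : M 0 2 = 0 := by omega
          have hb : M 1 2 = 1 := by omega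
          ext i j
          fin_cases i <;> fin_cases j <;>
            simp [Matrix.vecHead, Matrix.vecTail, e00, e10, e20, e01, e11, e21, ha, hb, hc]
      · rintro (rfl | rfl)
        · exact ⟨by simp, by simp, by simp, by simp⟩
        · refine ⟨by simp [Matrix.det_fin_three, Matrix.vecHead, Matrix.vecTail], ?_, ?_, ?_⟩
          · ext i j
            fin_cases i <;> fin_cases j <;>
              simp [Matrix.mul_apply, Fin.sum_univ_three, Matrix.transpose_apply,
                Matrix.vecHead, Matrix.vecTail] <;> ring
          · ext i
            fin_cases i <;>
              simp [Matrix.mulVec, dotProduct, Fin.sum_univ_three,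
                Matrix.vecHead, Matrix.vecTail]
          · ext i
            fin_cases i <;>
              simp [Matrix.mulVec, dotProduct, Fin.sum_univ_three,
                Matrix.vecHead, Matrix.vecTail]
  · refine ⟨!![1,0,1;0,1,1;0,0,-1], ?_, ?_, ?_⟩
    · intro h
      have := congrFun (congrFun h 2) 2
      simp [Matrix.one_apply] at this
    · ext i j
      fin_cases i <;> fin_cases j <;>
        simp [Matrix.mul_apply, Fin.sum_univ_three, Matrix.one_apply, Matrix.vecHead, Matrix.vecTail]
    · ext M
      simp only [Set.mem_setOf_eq, Set.mem_insert_iff, Set.mem_singleton_iff]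
      constructor
      · rintro ⟨hdet, hg, h1, h2⟩
        have e00 := congrFun h1 0
        have e10 := congrFun h1 1
        have e20 := congrFun h1 2
        have e01 := congrFun h2 0
        have e11 := congrFun h2 1
        have e21 := congrFun h2 2
        simp [Matrix.mulVec, dotProduct, Fin.sum_univ_three] at e00 e10 e20 e01 e11 e21
        have g02 := congrFun (congrFun hg 0) 2
        have g12 := congrFun (congrFun hg 1) 2
        simp [Matrix.mul_apply, Fin.sum_univ_three, Matrix.transpose_apply,
          e00, e10, e20, e01, e11, e21] at g02 g12
        rw [Matrix.det_fin_three] at hdet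
        rw [Int.isUnit_iff] at hdet
        simp [Matrix.vecHead, Matrix.vecTail, e00, e10, e20, e01, e11, e21] at hdet
        rcases hdet with hc | hc
        · left
          have ha : M 0 2 = 0 := by omega
          have hb : M 1 2 = 0 := by omega
          ext i j
          fin_cases i <;> fin_cases j <;>
            simp [Matrix.one_apply, Matrix.vecHead, Matrix.vecTail, e00, e10, e20, e01, e11, e21, ha, hb, hc]
        · right
          have ha : M 0 2 = 1 := by omega
          have hb : M 1 2 = 1 := by omega
          ext i j
          fin_cases i <;> fin_cases j <;>
            simp [Matrix.vecHead, Matrix.vecTail, e00, e10, e20, e01, e11, e21, ha, hb, hc]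
      · rintro (rfl | rfl)
        · exact ⟨by simp, by simp, by simp, by simp⟩
        · refine ⟨by simp [Matrix.det_fin_three, Matrix.vecHead, Matrix.vecTail], ?_, ?_, ?_⟩
          · ext i j
            fin_cases i <;> fin_cases j <;>
              simp [Matrix.mul_apply, Fin.sum_univ_three, Matrix.transpose_apply,
                Matrix.vecHead, Matrix.vecTail] <;> ring
          · ext i
            fin_cases i <;>
              simp [Matrix.mulVec, dotProduct, Fin.sum_univ_three,
                Matrix.vecHead, Matrix.vecTail]
          · ext i
            fin_cases i <;>
              simp [Matrix.mulVec, dotProduct, Fin.sum_univ_three,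
                Matrix.vecHead, Matrix.vecTail]
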